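/- Let F be a field of characteristic 2 with a valuation v : F× → Γ onto a totally ordered abelian group Γ, and let α₁,…,αₙ ∈ F× have negative values whose classes in Γ/2Γ are linearly independent over 𝔽₂. Then the quadratic n-fold Pfister form φ = ⟨⟨α₁,…,α_{n−1}, αₙ]] is anisotropic. -/

import Mathlib

/-- The subfield of squares `F²` of a field of characteristic 2. -/
def sqSubfield (F : Type*) [Field F] [CharP F 2] : Subfield F where
  carrier := {x | ∃ y : F, y ^ 2 = x}
  mul_mem' := by rintro a b ⟨y, rfl⟩ ⟨z, rfl⟩; exact ⟨y * z, by ring⟩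
  one_mem' := ⟨1, one_pow 2⟩
  add_mem' := by
    rintro a b ⟨y, rfl⟩ ⟨z, rfl⟩
    exact ⟨y + z, by rw [add_sq]; linear_combination (y*z) * (CharP.cast_eq_zero F 2)⟩
  zero_mem' := ⟨0, by ring⟩
  neg_mem' := by rintro a ⟨y, rfl⟩; exact ⟨y, (CharTwo.neg_eq _).symm⟩
  inv_mem' := by rintro a ⟨y, rfl⟩; exact ⟨y⁻¹, by rw [inv_pow]⟩

/-- The monomial `β₁^{d₁} ⋯ βₙ^{dₙ}`. -/
def mono {R : Type*} [CommRing R] {n : ℕ} (β : Fin n → R) (d : Fin n → Bool) : R :=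
  ∏ i, if d i then β i else 1

/-- The diagonal bilinear `n`-fold Pfister form `⟨⟨β₁,…,βₙ⟩⟩_b`. -/
def bPf (F : Type*) [Field F] {n : ℕ} (β : Fin n → F) (v w : (Fin n → Bool) → F) : F :=
  ∑ d, mono β d * v d * w d

/-- Pure part of the bilinear Pfister form. -/
def bPfPure (F : Type*) [Field F] {n : ℕ} (β : Fin n → F)
    (v w : {d : Fin n → Bool // d ≠ fun _ => false} → F) : F :=
  ∑ d, mono β d.1 * v d * w d

/-- Anisotropy of a bilinear form. -/
def BAniso (F : Type*) [Field F] {V : Type*} [AddCommGroup V] [Module F V]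
    (B : V → V → F) : Prop :=
  ∀ v : V, v ≠ 0 → B v v ≠ 0

/-- Isometry of bilinear forms. -/
def BilinIsom (F : Type*) [Field F] {V W : Type*} [AddCommGroup V] [Module F V]
    [AddCommGroup W] [Module F W] (B₁ : V → V → F) (B₂ : W → W → F) : Prop :=
  ∃ e : V ≃ₗ[F] W, ∀ v w, B₂ (e v) (e w) = B₁ v w

/-- Isometry of quadratic forms (given as value functions). -/
def QuadIsom (F : Type*) [Field F] {V W : Type*} [AddCommGroup V] [Module F V]
    [AddCommGroup W] [Module F W] (q₁ : V → F) (q₂ : W → F) : Prop :=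
  ∃ e : V ≃ₗ[F] W, ∀ v, q₂ (e v) = q₁ v

/-- The quadratic Pfister form `⟨⟨β₁,…,β_m, a]]` as a value function. -/
def qPf (R : Type*) [CommRing R] {m : ℕ} (β : Fin m → R) (a : R)
    (x : (Fin m → Bool) → R × R) : R :=
  ∑ e, mono β e * ((x e).1 ^ 2 + (x e).1 * (x e).2 + a * (x e).2 ^ 2)

/-- Minimal index where `d` is `true`. -/
noncomputable def minIdx {n : ℕ} (d : Fin n → Bool) (hd : d ≠ fun _ => false) : Fin n :=
  (Finset.univ.filter fun i => d i = true).min' (by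
    obtain ⟨i, hi⟩ := Function.ne_iff.mp hd
    exact ⟨i, Finset.mem_filter.mpr ⟨Finset.mem_univ i, by simpa using hi⟩⟩)

/-- Remove the `ℓ`-th entry from a tuple. -/
def removeIdx {R : Type*} {n : ℕ} (α : Fin n → R) (ℓ : Fin n) (i : Fin (n - 1)) : R :=
  if h : (i : ℕ) < (ℓ : ℕ) then α ⟨i, by omega⟩ else α ⟨(i : ℕ) + 1, by omega⟩

/-- First `n-1` entries of a tuple. -/
def front {R : Type*} {n : ℕ} (α : Fin n → R) (i : Fin (n - 1)) : R :=
  α ⟨i, by omega⟩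

/-- Last entry of a tuple (junk value `0` if the tuple is empty). -/
def qlast {R : Type*} [CommRing R] {n : ℕ} (α : Fin n → R) : R :=
  if h : n = 0 then 0 else α ⟨n - 1, by omega⟩

section aux
variable {F Γ : Type*} [Field F] [CharP F 2] [AddCommGroup Γ] [LinearOrder Γ] [IsOrderedAddMonoid Γ]
set_option linter.unusedSectionVars false
set_option linter.unusedVariables false

theorem auxA_v_one (v : F → Γ)
    (hmul : ∀ x y : F, x ≠ 0 → y ≠ 0 → v (x * y) = v x + v y) : v 1 = 0 := by
  have h := hmul 1 1 one_ne_zero one_ne_zero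
  rw [mul_one] at h
  exact left_eq_add.mp h

theorem auxA_add_lt' (v : F → Γ)
    (hadd : ∀ x y : F, x ≠ 0 → y ≠ 0 → x + y ≠ 0 → min (v x) (v y) ≤ v (x + y))
    (x y : F) (hx : x ≠ 0) (hy : y ≠ 0) (hlt : v x < v y) :
    x + y ≠ 0 ∧ v (x + y) = v x := by
  have hne : x + y ≠ 0 := by
    intro h
    have hxy : x = y := by
      have := eq_neg_of_add_eq_zero_left h
      rwa [CharTwo.neg_eq] at this
    exact absurd (hxy ▸ hlt) (lt_irrefl _)
  refine ⟨hne, ?_⟩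
  have h1 : v x ≤ v (x + y) := (min_eq_left hlt.le) ▸ hadd x y hx hy hne
  rcases eq_or_lt_of_le h1 with h | h
  · exact h.symm
  · exfalso
    have hxx : x + y + y = x := by
      rw [add_assoc, CharTwo.add_self_eq_zero, add_zero]
    have h2 := hadd (x + y) y hne hy (by rw [hxx]; exact hx)
    rw [hxx] at h2
    exact absurd (lt_of_lt_of_le (lt_min h hlt) h2) (lt_irrefl _)

theorem auxA_add_ne' (v : F → Γ)
    (hadd : ∀ x y : F, x ≠ 0 → y ≠ 0 → x + y ≠ 0 → min (v x) (v y) ≤ v (x + y))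
    (x y : F) (hx : x ≠ 0) (hy : y ≠ 0) (hne : v x ≠ v y) :
    x + y ≠ 0 ∧ v (x + y) = min (v x) (v y) := by
  rcases hne.lt_or_gt with h | h
  · obtain ⟨h1, h2⟩ := auxA_add_lt' v hadd x y hx hy h
    exact ⟨h1, by rw [h2, min_eq_left h.le]⟩
  · obtain ⟨h1, h2⟩ := auxA_add_lt' v hadd y x hy hx h
    rw [add_comm] at h1 h2
    exact ⟨h1, by rw [h2, min_eq_right h.le]⟩

theorem auxA_sum {ι : Type*} (v : F → Γ)
    (hadd : ∀ x y : F, x ≠ 0 → y ≠ 0 → x + y ≠ 0 → min (v x) (v y) ≤ v (x + y))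
    (s : Finset ι) (f : ι → F) (hs : s.Nonempty)
    (h0 : ∀ i ∈ s, f i ≠ 0)
    (hd : ∀ i ∈ s, ∀ j ∈ s, i ≠ j → v (f i) ≠ v (f j)) :
    (∑ i ∈ s, f i) ≠ 0 ∧ ∃ i ∈ s, v (∑ i ∈ s, f i) = v (f i) := by
  classical
  induction s using Finset.cons_induction with
  | empty => exact absurd hs (by simp)
  | cons a t hat ih =>
    rcases t.eq_empty_or_nonempty with rfl | ht
    · simp only [Finset.sum_cons, Finset.sum_empty, add_zero]
      exact ⟨h0 a (by simp), a, by simp, rfl⟩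
    · obtain ⟨h1, i, hi, h2⟩ := ih ht (fun i hi => h0 i (by simp [hi]))
        (fun i hi j hj => hd i (by simp [hi]) j (by simp [hj]))
      have hfa : f a ≠ 0 := h0 a (by simp)
      have hvne : v (f a) ≠ v (∑ i ∈ t, f i) := by
        rw [h2]
        exact hd a (by simp) i (by simp [hi]) (by rintro rfl; exact hat hi)
      rw [Finset.sum_cons]
      obtain ⟨h3, h4⟩ := auxA_add_ne' v hadd _ _ hfa h1 hvne
      refine ⟨h3, ?_⟩
      rcases min_cases (v (f a)) (v (∑ i ∈ t, f i)) with ⟨he, _⟩ | ⟨he, _⟩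
      · exact ⟨a, by simp, by rw [h4, he]⟩
      · exact ⟨i, by simp [hi], by rw [h4, he, h2]⟩

theorem auxA_prod {ι : Type*} (v : F → Γ)
    (hmul : ∀ x y : F, x ≠ 0 → y ≠ 0 → v (x * y) = v x + v y)
    (s : Finset ι) (f : ι → F) (h0 : ∀ i ∈ s, f i ≠ 0) :
    v (∏ i ∈ s, f i) = ∑ i ∈ s, v (f i) := by
  classical
  induction s using Finset.cons_induction with
  | empty => simpa using auxA_v_one v hmul
  | cons a t hat ih =>
    rw [Finset.prod_cons, Finset.sum_cons,
      hmul _ _ (h0 a (by simp)) (Finset.prod_ne_zero_iff.mpr fun i hi => h0 i (by simp [hi])),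
      ih fun i hi => h0 i (by simp [hi])]

theorem aux_ite_xor (p q : Bool) (X : Γ) :
    (if (p != q) then X else 0) =
      ((if p then X else 0) + (if q then X else 0)) - 2 • (if p && q then X else 0) := by
  cases p <;> cases q <;> simp [two_smul]

theorem auxA_quad (v : F → Γ)
    (hmul : ∀ x y : F, x ≠ 0 → y ≠ 0 → v (x * y) = v x + v y)
    (hadd : ∀ x y : F, x ≠ 0 → y ≠ 0 → x + y ≠ 0 → min (v x) (v y) ≤ v (x + y))
    (a : F) (ha0 : a ≠ 0) (hva : v a < 0) (hodd : ∀ h : Γ, v a ≠ 2 • h)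
    (u w : F) (hp : ¬(u = 0 ∧ w = 0)) :
    u ^ 2 + u * w + a * w ^ 2 ≠ 0 ∧
      ∃ (b : Bool) (g : Γ), v (u ^ 2 + u * w + a * w ^ 2) = (if b then v a else 0) + 2 • g := by
  have hvsq : ∀ x : F, x ≠ 0 → v (x ^ 2) = 2 • v x := by
    intro x hx; rw [sq, hmul x x hx hx, two_smul]
  by_cases hu : u = 0
  · have hw : w ≠ 0 := fun h => hp ⟨hu, h⟩
    have hQ : u ^ 2 + u * w + a * w ^ 2 = a * w ^ 2 := by rw [hu]; ring
    rw [hQ]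
    refine ⟨mul_ne_zero ha0 (pow_ne_zero 2 hw), true, v w, ?_⟩
    rw [hmul a _ ha0 (pow_ne_zero 2 hw), hvsq w hw, if_pos rfl]
  by_cases hw : w = 0
  · have hQ : u ^ 2 + u * w + a * w ^ 2 = u ^ 2 := by rw [hw]; ring
    rw [hQ]
    refine ⟨pow_ne_zero 2 hu, false, v u, ?_⟩
    rw [hvsq u hu]; simp
  have hu2 : (u ^ 2 : F) ≠ 0 := pow_ne_zero 2 hu
  have haw2 : a * w ^ 2 ≠ 0 := mul_ne_zero ha0 (pow_ne_zero 2 hw)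
  have huw : u * w ≠ 0 := mul_ne_zero hu hw
  have hA : v (u ^ 2) = 2 • v u := hvsq u hu
  have hB : v (a * w ^ 2) = v a + 2 • v w := by
    rw [hmul a _ ha0 (pow_ne_zero 2 hw), hvsq w hw]
  have hAB : v (u ^ 2) ≠ v (a * w ^ 2) := by
    intro h
    rw [hA, hB] at h
    exact hodd (v u - v w) (by rw [smul_sub, h]; abel)
  obtain ⟨hne1, hval1⟩ := auxA_add_ne' v hadd _ _ hu2 haw2 hAB
  have hvuw : v (u * w) = v u + v w := hmul u w hu hw
  have hminlt : min (v (u ^ 2)) (v (a * w ^ 2)) < v (u * w) := by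
    by_contra hcon
    push_neg at hcon
    have hle1 : v (u * w) ≤ v (u ^ 2) := hcon.trans (min_le_left _ _)
    have hle2 : v (u * w) ≤ v (a * w ^ 2) := hcon.trans (min_le_right _ _)
    have hsum : v (u * w) + v (u * w) ≤ v (u ^ 2) + v (a * w ^ 2) := add_le_add hle1 hle2
    rw [hA, hB, hvuw] at hsum
    have hrw : v u + v w + (v u + v w) = 2 • v u + 2 • v w := by simp [two_smul]; abel
    rw [hrw] at hsum
    have hlt2 : 2 • v u + (v a + 2 • v w) < 2 • v u + 2 • v w := by
      calc 2 • v u + (v a + 2 • v w) = (2 • v u + 2 • v w) + v a := by abel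
        _ < (2 • v u + 2 • v w) + 0 := add_lt_add_right hva _
        _ = 2 • v u + 2 • v w := add_zero _
    exact absurd (hsum.trans_lt hlt2) (lt_irrefl _)
  rw [← hval1] at hminlt
  obtain ⟨hne2, hval2⟩ := auxA_add_lt' v hadd _ _ hne1 huw hminlt
  have hQ : u ^ 2 + u * w + a * w ^ 2 = u ^ 2 + a * w ^ 2 + u * w := by ring
  rw [hQ]
  refine ⟨hne2, ?_⟩
  rw [hval2, hval1]
  rcases min_cases (v (u ^ 2)) (v (a * w ^ 2)) with ⟨he, _⟩ | ⟨he, _⟩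
  · exact ⟨false, v u, by rw [he, hA]; simp⟩
  · exact ⟨true, v w, by rw [he, hB, if_pos rfl]⟩

end aux

/-- if `α₁,…,αₙ` have negative values whose classes in `Γ/2Γ` are
`𝔽₂`-independent, the quadratic `n`-fold Pfister form `⟨⟨α₁,…,α_{n-1},αₙ]]` is
anisotropic. -/
theorem stmt_10 (F Γ : Type*) [Field F] [CharP F 2]
    [AddCommGroup Γ] [LinearOrder Γ] [IsOrderedAddMonoid Γ] (v : F → Γ)
    (hmul : ∀ x y : F, x ≠ 0 → y ≠ 0 → v (x * y) = v x + v y)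
    (hadd : ∀ x y : F, x ≠ 0 → y ≠ 0 → x + y ≠ 0 → min (v x) (v y) ≤ v (x + y))
    (hsurj : ∀ g : Γ, ∃ x : F, x ≠ 0 ∧ v x = g)
    (n : ℕ) (hn : 1 ≤ n) (α : Fin n → F) (hα0 : ∀ i, α i ≠ 0)
    (hneg : ∀ i, v (α i) < 0)
    (hind : ∀ c : Fin n → Bool, (∃ i, c i = true) →
      ∀ h : Γ, (∑ i, if c i then v (α i) else 0) ≠ 2 • h) :
    ∀ x : (Fin (n - 1) → Bool) → F × F, x ≠ 0 →
      qPf F (front α) (qlast α) x ≠ 0 := by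
  classical
  obtain ⟨m, rfl⟩ : ∃ m, n = m + 1 := ⟨n - 1, by omega⟩
  intro x hx
  -- basic facts about the last entry
  have ha : qlast α = α (Fin.last m) := by
    rw [qlast, dif_neg (Nat.succ_ne_zero m)]
    exact congrArg α (Fin.ext (by simp [Fin.last]))
  have ha0 : qlast α ≠ 0 := by rw [ha]; exact hα0 _
  have hva_neg : v (qlast α) < 0 := by rw [ha]; exact hneg _
  have hva_odd : ∀ h : Γ, v (qlast α) ≠ 2 • h := by
    intro h hEq
    apply hind (Fin.snoc (fun _ => false) true) ⟨Fin.last m, by simp⟩ h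
    rw [Fin.sum_univ_castSucc]
    simp only [Fin.snoc_castSucc, Fin.snoc_last]
    simpa using (ha ▸ hEq)
  have hfront : ∀ i : Fin m, front α i = α (Fin.castSucc i) := fun i => rfl
  -- monomial values
  have hmono_ne : ∀ e : Fin m → Bool, mono (front α) e ≠ 0 := by
    intro e
    rw [mono]
    exact Finset.prod_ne_zero_iff.mpr fun i _ => by
      rcases e i with _ | _ <;> simp [hfront, hα0]
  have hmono_val : ∀ e : Fin m → Bool,
      v (mono (front α) e) = ∑ i : Fin m, if e i then v (α (Fin.castSucc i)) else 0 := by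
    intro e
    rw [mono, auxA_prod v hmul _ _ (fun i _ => by rcases e i with _ | _ <;> simp [hfront, hα0])]
    refine Finset.sum_congr rfl fun i _ => ?_
    rcases e i with _ | _ <;> simp [hfront, auxA_v_one v hmul]
  -- the term function
  set T : (Fin m → Bool) → F := fun e =>
    mono (front α) e * ((x e).1 ^ 2 + (x e).1 * (x e).2 + qlast α * (x e).2 ^ 2) with hT
  have hquad : ∀ e : Fin m → Bool, x e ≠ 0 →
      ((x e).1 ^ 2 + (x e).1 * (x e).2 + qlast α * (x e).2 ^ 2 ≠ 0 ∧
        ∃ (b : Bool) (g : Γ), v ((x e).1 ^ 2 + (x e).1 * (x e).2 + qlast α * (x e).2 ^ 2)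
          = (if b then v (qlast α) else 0) + 2 • g) := by
    intro e he
    refine auxA_quad v hmul hadd _ ha0 hva_neg hva_odd _ _ ?_
    rintro ⟨h1, h2⟩
    exact he (Prod.ext h1 h2)
  set s : Finset (Fin m → Bool) := Finset.univ.filter fun e => x e ≠ 0 with hsdef
  have hs : s.Nonempty := by
    obtain ⟨e, he⟩ := Function.ne_iff.mp hx
    exact ⟨e, Finset.mem_filter.mpr ⟨Finset.mem_univ e, he⟩⟩
  have hmemx : ∀ e ∈ s, x e ≠ 0 := fun e he => (Finset.mem_filter.mp he).2
  have hT0 : ∀ e ∈ s, T e ≠ 0 := fun e he =>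
    mul_ne_zero (hmono_ne e) (hquad e (hmemx e he)).1
  have hTval : ∀ e ∈ s, v (T e) =
      (∑ i : Fin m, if e i then v (α (Fin.castSucc i)) else 0) +
        v ((x e).1 ^ 2 + (x e).1 * (x e).2 + qlast α * (x e).2 ^ 2) := by
    intro e he
    rw [hT]
    rw [hmul _ _ (hmono_ne e) (hquad e (hmemx e he)).1, hmono_val e]
  -- distinctness of values
  have hdist : ∀ e ∈ s, ∀ e' ∈ s, e ≠ e' → v (T e) ≠ v (T e') := by
    intro e he e' he' hne heq
    obtain ⟨b, g, hbg⟩ := (hquad e (hmemx e he)).2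
    obtain ⟨b', g', hbg'⟩ := (hquad e' (hmemx e' he')).2
    have H1 : v (T e) = (∑ i : Fin m, if e i then v (α (Fin.castSucc i)) else 0) +
        ((if b then v (α (Fin.last m)) else 0) + 2 • g) := by
      rw [hTval e he, hbg, ha]
    have H2 : v (T e) = (∑ i : Fin m, if e' i then v (α (Fin.castSucc i)) else 0) +
        ((if b' then v (α (Fin.last m)) else 0) + 2 • g') := by
      rw [heq, hTval e' he', hbg', ha]
    obtain ⟨i₀, hi₀⟩ := Function.ne_iff.mp hne
    refine hind (Fin.snoc (fun i => e i != e' i) (b != b'))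
      ⟨Fin.castSucc i₀, by rw [Fin.snoc_castSucc]; exact bne_iff_ne.mpr hi₀⟩
      (v (T e) - g - g' - (∑ i : Fin m, if e i && e' i then v (α (Fin.castSucc i)) else 0)
        - (if b && b' then v (α (Fin.last m)) else 0)) ?_
    rw [Fin.sum_univ_castSucc]
    simp only [Fin.snoc_castSucc, Fin.snoc_last]
    simp only [aux_ite_xor]
    rw [Finset.sum_sub_distrib, Finset.sum_add_distrib, ← Finset.smul_sum]
    have e1 : (∑ i : Fin m, if e i then v (α (Fin.castSucc i)) else 0) =
        v (T e) - (if b then v (α (Fin.last m)) else 0) - 2 • g := by rw [H1]; abel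
    have e2 : (∑ i : Fin m, if e' i then v (α (Fin.castSucc i)) else 0) =
        v (T e) - (if b' then v (α (Fin.last m)) else 0) - 2 • g' := by rw [H2]; abel
    rw [e1, e2]
    abel
  -- assemble
  have hsum : qPf F (front α) (qlast α) x = ∑ e ∈ s, T e := by
    rw [qPf, hsdef]
    refine (Finset.sum_filter_of_ne ?_).symm
    intro e _ hne hxe
    apply hne
    rw [hxe]
    simp
  rw [hsum]
  exact (auxA_sum v hadd s T hs hT0 hdist).1
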